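/- The functor ∂_R: R → R is frank: for all objects m of R and n'=∂_R(n) of R, there exists an object n with ∂_R(n)=n' and ∂_R(hom(m,n))=hom(∂_R m, ∂_R n). -/

import Mathlib

/-- Morphisms of the category `R` from `m` to `n`: subsets `x ⊆ [n] = {1,…,n}` with `|x| = m`
(the pair `(x,n)` is recorded by the type depending on `n`). -/
def RHom (m n : ℕ) : Type := {x : Finset ℕ // x ⊆ Finset.Icc 1 n ∧ x.card = m}

/-- The increasing enumeration of a finset `y` of size `l`, as a function `[l] → y`,
extended by `0` off `[l] = {1,…,l}`. -/
noncomputable def Renum (y : Finset ℕ) {l : ℕ} (h : y.card = l) (j : ℕ) : ℕ :=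
  if hj : j - 1 < l then (y.orderIsoOfFin h ⟨j - 1, hj⟩ : ℕ) else 0

/-- Composition in `R`: `(y,n) · (x,m) = (f_y(x), n)` where `f_y : [m] → y` is the unique
increasing bijection. -/
noncomputable def Rcomp {k l m : ℕ} (x : RHom k l) (y : RHom l m) : RHom k m :=
  ⟨x.1.image (Renum y.1 y.2.2), by
    constructor
    · intro z hz
      simp only [Finset.mem_image] at hz
      obtain ⟨j, hj, rfl⟩ := hz
      have hjl : j ∈ Finset.Icc 1 l := x.2.1 hj
      rw [Finset.mem_Icc] at hjl
      have hlt : j - 1 < l := by omega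
      unfold Renum
      rw [dif_pos hlt]
      exact y.2.1 (y.1.orderIsoOfFin y.2.2 ⟨j - 1, hlt⟩).2
    · rw [Finset.card_image_of_injOn, x.2.2]
      intro j₁ h₁ j₂ h₂ he
      have hj₁ := x.2.1 h₁
      have hj₂ := x.2.1 h₂
      rw [Finset.mem_Icc] at hj₁ hj₂
      have l₁ : j₁ - 1 < l := by omega
      have l₂ : j₂ - 1 < l := by omega
      unfold Renum at he
      rw [dif_pos l₁, dif_pos l₂] at he
      have hfin : (⟨j₁ - 1, l₁⟩ : Fin l) = ⟨j₂ - 1, l₂⟩ :=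
        (y.1.orderIsoOfFin y.2.2).injective (Subtype.ext he)
      have hv : j₁ - 1 = j₂ - 1 := congrArg Fin.val hfin
      omega⟩

/-- The functor `∂_R` on objects: `n ↦ max(n−1, 0)` (truncated subtraction). -/
def RdelObj (n : ℕ) : ℕ := n - 1

/-- The functor `∂_R` on morphisms: `(x,n) ↦ (x ∖ {max x}, max(n−1,0))`
(and `(∅,n) ↦ (∅, max(n−1,0))`). -/
def Rdel {m n : ℕ} (x : RHom m n) : RHom (RdelObj m) (RdelObj n) :=
  ⟨x.1.erase (WithBot.unbotD 0 x.1.max), by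
    constructor
    · intro z hz
      have hz' := Finset.mem_of_mem_erase hz
      have hne := Finset.ne_of_mem_erase hz
      have hnonempty : x.1.Nonempty := ⟨z, hz'⟩
      have hmax : WithBot.unbotD 0 x.1.max = x.1.max' hnonempty := by
        rw [← Finset.coe_max' hnonempty]; rfl
      have hle : z ≤ x.1.max' hnonempty := Finset.le_max' _ z hz'
      have hlt : z < x.1.max' hnonempty := lt_of_le_of_ne hle (by rw [← hmax]; exact hne)
      have hmem := x.2.1 (x.1.max'_mem hnonempty)
      rw [Finset.mem_Icc] at hmem
      have hzmem := x.2.1 hz'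
      rw [Finset.mem_Icc] at hzmem
      rw [Finset.mem_Icc]
      unfold RdelObj
      omega
    · rcases x.1.eq_empty_or_nonempty with he | hne
      · have hm : m = 0 := by rw [← x.2.2, he]; rfl
        rw [he]
        simp [hm, RdelObj]
      · have hmax : WithBot.unbotD 0 x.1.max = x.1.max' hne := by
          rw [← Finset.coe_max' hne]; rfl
        rw [hmax, Finset.card_erase_of_mem (x.1.max'_mem hne), x.2.2]
        rfl⟩

/-- The functor `∂_R : R → R` is frank: for all objects `m` and `n'` (an object in the image
of `∂_R` on objects), there exists an object `n` with `∂_R n = n'` and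
`∂_R(hom(m,n)) = hom(∂_R m, ∂_R n)`. -/
theorem Rdel_frank (m n' : ℕ) :
    ∃ n : ℕ, RdelObj n = n' ∧
      ∀ y' : RHom (RdelObj m) (RdelObj n), ∃ y : RHom m n, Rdel y = y' := by
  refine ⟨n' + 1, rfl, ?_⟩
  intro y'
  rcases Nat.eq_zero_or_pos m with hm | hm
  · subst hm
    have hy' : y'.1 = ∅ := Finset.card_eq_zero.mp y'.2.2
    refine ⟨⟨∅, by simp, rfl⟩, ?_⟩
    apply Subtype.ext
    simp [Rdel, hy']
  · have hnotmem : n' + 1 ∉ y'.1 := fun h => by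
      have := y'.2.1 h
      rw [Finset.mem_Icc] at this
      unfold RdelObj at this
      omega
    refine ⟨⟨insert (n' + 1) y'.1, ?_, ?_⟩, ?_⟩
    · intro z hz
      rcases Finset.mem_insert.mp hz with rfl | hz
      · rw [Finset.mem_Icc]; omega
      · have := y'.2.1 hz
        rw [Finset.mem_Icc] at this ⊢
        unfold RdelObj at this
        omega
    · rw [Finset.card_insert_of_notMem hnotmem, y'.2.2]
      unfold RdelObj
      omega
    · apply Subtype.ext
      show (insert (n' + 1) y'.1).erase (WithBot.unbotD 0 (insert (n' + 1) y'.1).max) = y'.1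
      have hne : (insert (n' + 1) y'.1).Nonempty := ⟨n' + 1, Finset.mem_insert_self _ _⟩
      have hmaxeq : WithBot.unbotD 0 (insert (n' + 1) y'.1).max = (insert (n' + 1) y'.1).max' hne := by
        rw [← Finset.coe_max' hne]; rfl
      have hmax : (insert (n' + 1) y'.1).max' hne = n' + 1 := by
        apply le_antisymm
        · apply Finset.max'_le
          intro z hz
          rcases Finset.mem_insert.mp hz with rfl | hz
          · exact le_refl _
          · have := y'.2.1 hz
            rw [Finset.mem_Icc] at this
            unfold RdelObj at this
            omega
        · exact Finset.le_max' _ _ (Finset.mem_insert_self _ _)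
      rw [hmaxeq, hmax, Finset.erase_insert hnotmem]
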